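/- The spider Sp(1^[1], 2^[8]) (one leg of length 1 and eight legs of length 2) admits no local antimagic total labeling with exactly 2 distinct vertex weights; hence χ_lat(Sp(1, 2^[8])) = 3. -/

import Mathlib

open Finset

variable {V : Type*} [Fintype V] [DecidableEq V]

/-- The weight of a vertex `u` under the total labeling given by vertex labels `fv`
and edge labels `fe` : `w(u) = f(u) + \sum_{e incident to u} f(e)`. -/
def latWeight (G : SimpleGraph V) [DecidableRel G.Adj]
    (fv : V → ℕ) (fe : Sym2 V → ℕ) (u : V) : ℕ :=
  fv u + ∑ v ∈ G.neighborFinset u, fe s(u, v)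

/-- `fv, fe` together form a bijection from `V(G) ∪ E(G)` onto `{1, …, p + q}`,
where `p` is the order and `q` is the size of `G`. -/
def IsTotalLabeling (G : SimpleGraph V) [DecidableRel G.Adj]
    (fv : V → ℕ) (fe : Sym2 V → ℕ) : Prop :=
  Set.BijOn (Sum.elim fv (fun e : G.edgeSet => fe (e : Sym2 V))) Set.univ
    (Set.Icc 1 (Fintype.card V + G.edgeFinset.card))

/-- A local antimagic total labeling of `G` : a bijective total labeling such that any two
adjacent vertices get distinct weights. -/
def IsLocalAntimagicTotal (G : SimpleGraph V) [DecidableRel G.Adj]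
    (fv : V → ℕ) (fe : Sym2 V → ℕ) : Prop :=
  IsTotalLabeling G fv fe ∧
    ∀ ⦃u v : V⦄, G.Adj u v → latWeight G fv fe u ≠ latWeight G fv fe v

/-- The local antimagic total chromatic number `χ_lat(G)` : the minimum number of distinct
vertex weights taken over all local antimagic total labelings of `G`. -/
noncomputable def chiLat (G : SimpleGraph V) [DecidableRel G.Adj] : ℕ :=
  sInf {c | ∃ fv fe, IsLocalAntimagicTotal G fv fe ∧
    (Finset.univ.image (latWeight G fv fe)).card = c}

instance {W : Type*} (r : W → W → Prop) [DecidableEq W] [DecidableRel r] :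
    DecidableRel (SimpleGraph.fromRel r).Adj :=
  fun a b => decidable_of_iff _ (SimpleGraph.fromRel_adj r a b).symm

/-- Adjacency for the spider `Sp(1^[m], 2^[n])` : the center `x = none` is adjacent to each
leaf `y i = some (Sum.inl i)` and to each `u j = some (Sum.inr (j, false))`, and each `u j`
is adjacent to the leaf `v j = some (Sum.inr (j, true))`. -/
def spider12R (m n : ℕ) :
    Option (Fin m ⊕ Fin n × Bool) → Option (Fin m ⊕ Fin n × Bool) → Bool
  | none, some (Sum.inl _) => true
  | none, some (Sum.inr (_, false)) => true
  | some (Sum.inr (j, false)), some (Sum.inr (j', true)) => decide (j = j')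
  | _, _ => false

/-- The spider `Sp(1^[m], 2^[n])` with `m` legs of length `1` and `n` legs of length `2`. -/
abbrev spider12 (m n : ℕ) : SimpleGraph (Option (Fin m ⊕ Fin n × Bool)) :=
  SimpleGraph.fromRel (fun a b => spider12R m n a b = true)

/- ### Auxiliary setup for the spider `Sp(1^[1], 2^[8])` -/

abbrev V8 := Option (Fin 1 ⊕ Fin 8 × Bool)
abbrev G8 : SimpleGraph V8 := spider12 1 8
abbrev EI8 := Option (Fin 8 × Bool)

def vV8x : V8 := none
def vV8y : V8 := some (Sum.inl 0)
def vV8u (j : Fin 8) : V8 := some (Sum.inr (j, false))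
def vV8v (j : Fin 8) : V8 := some (Sum.inr (j, true))

/-- enumeration of the edges of the spider -/
def eE8 : EI8 → Sym2 V8
  | none => s(vV8x, vV8y)
  | some (j, false) => s(vV8x, vV8u j)
  | some (j, true) => s(vV8u j, vV8v j)

lemma eE8_inj : Function.Injective eE8 := by decide

lemma edgeFinset_G8 : G8.edgeFinset = Finset.univ.image eE8 := by decide

lemma card35 : Fintype.card V8 + G8.edgeFinset.card = 35 := by
  rw [edgeFinset_G8, Finset.card_image_of_injective _ eE8_inj]
  decide

lemma mem_edgeSet_eE8 : ∀ o : EI8, eE8 o ∈ G8.edgeSet := by decide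

/-- embedding of the index type into `V ⊕ E(G)` -/
def ι8 : V8 ⊕ EI8 → V8 ⊕ G8.edgeSet :=
  Sum.map id (fun o => ⟨eE8 o, mem_edgeSet_eE8 o⟩)

lemma ι8_inj : Function.Injective ι8 := by
  intro i i' h
  cases i with
  | inl v => cases i' with
    | inl v' => simpa [ι8] using h
    | inr o => simp [ι8] at h
  | inr o => cases i' with
    | inl v' => simp [ι8] at h
    | inr o' =>
      simp only [ι8, Sum.map_inr, Sum.inr.injEq, Subtype.mk.injEq] at h
      exact congrArg _ (eE8_inj h)

lemma ι8_surj : Function.Surjective ι8 := by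
  rintro (v | ⟨e, he⟩)
  · exact ⟨Sum.inl v, rfl⟩
  · have : e ∈ G8.edgeFinset := by rwa [SimpleGraph.mem_edgeFinset]
    rw [edgeFinset_G8] at this
    obtain ⟨o, -, rfl⟩ := Finset.mem_image.mp this
    exact ⟨Sum.inr o, rfl⟩

lemma g_ι8 (fv : V8 → ℕ) (fe : Sym2 V8 → ℕ) (i : V8 ⊕ EI8) :
    Sum.elim fv (fun e : G8.edgeSet => fe (e : Sym2 V8)) (ι8 i) =
      Sum.elim fv (fun o => fe (eE8 o)) i := by
  cases i with
  | inl v => rfl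
  | inr o => rfl

/- ### weight formulas -/

lemma weight_x (fv : V8 → ℕ) (fe : Sym2 V8 → ℕ) :
    latWeight G8 fv fe vV8x
      = fv vV8x + (fe (eE8 none) + ∑ j : Fin 8, fe (eE8 (some (j, false)))) := by
  have hN : G8.neighborFinset vV8x = insert vV8y (Finset.univ.image vV8u) := by decide
  have h1 : vV8y ∉ Finset.univ.image vV8u := by decide
  have h2 : ∀ x ∈ (Finset.univ : Finset (Fin 8)), ∀ y ∈ Finset.univ, vV8u x = vV8u y → x = y := by
    decide
  rw [latWeight, hN, Finset.sum_insert h1, Finset.sum_image h2]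
  rfl

lemma weight_y (fv : V8 → ℕ) (fe : Sym2 V8 → ℕ) :
    latWeight G8 fv fe vV8y = fv vV8y + fe (eE8 none) := by
  have hN : G8.neighborFinset vV8y = {vV8x} := by decide
  rw [latWeight, hN, Finset.sum_singleton]
  rw [show s(vV8y, vV8x) = s(vV8x, vV8y) from Sym2.eq_swap]
  rfl

lemma weight_u (fv : V8 → ℕ) (fe : Sym2 V8 → ℕ) (j : Fin 8) :
    latWeight G8 fv fe (vV8u j)
      = fv (vV8u j) + (fe (eE8 (some (j, false))) + fe (eE8 (some (j, true)))) := by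
  have hN : ∀ j : Fin 8, G8.neighborFinset (vV8u j) = {vV8x, vV8v j} := by decide
  have h1 : ∀ j : Fin 8, vV8x ∉ ({vV8v j} : Finset V8) := by decide
  rw [latWeight, hN j, Finset.sum_insert (h1 j), Finset.sum_singleton]
  rw [show s(vV8u j, vV8x) = s(vV8x, vV8u j) from Sym2.eq_swap]
  rfl

lemma weight_v (fv : V8 → ℕ) (fe : Sym2 V8 → ℕ) (j : Fin 8) :
    latWeight G8 fv fe (vV8v j) = fv (vV8v j) + fe (eE8 (some (j, true))) := by
  have hN : ∀ j : Fin 8, G8.neighborFinset (vV8v j) = {vV8u j} := by decide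
  rw [latWeight, hN j, Finset.sum_singleton]
  rw [show s(vV8v j, vV8u j) = s(vV8u j, vV8v j) from Sym2.eq_swap]
  rfl

/- ### a counting lemma : `n` distinct positive integers sum to at least `n(n+1)/2` -/

lemma two_mul_sum_lb : ∀ (n : ℕ) (s : Finset ℕ), s.card = n → (∀ x ∈ s, 1 ≤ x) →
    n * (n + 1) ≤ 2 * ∑ x ∈ s, x := by
  intro n
  induction n with
  | zero => intro s _ _; simp
  | succ k ih =>
    intro s hc h1
    have hne : s.Nonempty := Finset.card_pos.mp (by omega)
    have hMs : s.max' hne ∈ s := s.max'_mem hne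
    have hsub : s ⊆ Finset.Icc 1 (s.max' hne) :=
      fun x hx => Finset.mem_Icc.mpr ⟨h1 x hx, s.le_max' x hx⟩
    have hcardle : s.card ≤ s.max' hne := by
      have := Finset.card_le_card hsub
      rw [Nat.card_Icc] at this; omega
    have herase := ih (s.erase (s.max' hne))
      (by simp [Finset.card_erase_of_mem hMs, hc])
      (fun x hx => h1 x (Finset.mem_of_mem_erase hx))
    have hsum : s.max' hne + ∑ x ∈ s.erase (s.max' hne), x = ∑ x ∈ s, x :=
      Finset.add_sum_erase s (fun x => x) hMs
    have hM : k + 1 ≤ s.max' hne := hc ▸ hcardle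
    calc (k + 1) * (k + 1 + 1) = k * (k + 1) + 2 * (k + 1) := by ring
      _ ≤ 2 * ∑ x ∈ s.erase (s.max' hne), x + 2 * s.max' hne :=
          Nat.add_le_add herase (by omega)
      _ = 2 * (s.max' hne + ∑ x ∈ s.erase (s.max' hne), x) := by ring
      _ = 2 * ∑ x ∈ s, x := by rw [hsum]

/- ### the impossibility of two weights -/

lemma no_two_weights : ∀ fv fe, IsLocalAntimagicTotal (spider12 1 8) fv fe →
    (Finset.univ.image (latWeight (spider12 1 8) fv fe)).card ≠ 2 := by
  intro fv fe ⟨htl, hadj⟩ hcard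
  unfold IsTotalLabeling at htl
  rw [card35] at htl
  set w := latWeight G8 fv fe with hw
  set m : V8 ⊕ EI8 → ℕ := Sum.elim fv (fun o => fe (eE8 o)) with hmdef
  have hginj : Function.Injective
      (Sum.elim fv (fun e : G8.edgeSet => fe (e : Sym2 V8))) :=
    Set.injOn_univ.mp htl.2.1
  have hm : Function.Injective m := by
    intro i i' h
    exact ι8_inj (hginj (by rw [g_ι8, g_ι8]; exact h))
  have hrange : ∀ i, 1 ≤ m i ∧ m i ≤ 35 := by
    intro i
    have := htl.1 (Set.mem_univ (ι8 i))
    rw [g_ι8] at this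
    exact Set.mem_Icc.mp this
  -- the two colors
  set a := w vV8x with ha
  obtain ⟨p, q, hpq, himg2⟩ := Finset.card_eq_two.mp hcard
  have hmem2 : ∀ z : V8, w z = p ∨ w z = q := by
    intro z
    have : w z ∈ Finset.univ.image w := Finset.mem_image_of_mem _ (Finset.mem_univ z)
    rw [himg2] at this
    simpa using this
  obtain ⟨b, hab, hall⟩ : ∃ b, a ≠ b ∧ ∀ z : V8, w z = a ∨ w z = b := by
    rcases hmem2 vV8x with hap | haq
    · exact ⟨q, by rw [← ha] at hap; rw [hap]; exact hpq, fun z => by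
        rw [← ha] at hap; rw [hap]; exact hmem2 z⟩
    · exact ⟨p, by rw [← ha] at haq; rw [haq]; exact fun h => hpq h.symm, fun z => by
        rw [← ha] at haq; rw [haq]; exact (hmem2 z).symm⟩
  have hadjxu : ∀ j : Fin 8, G8.Adj vV8x (vV8u j) := by decide
  have hadjxy : G8.Adj vV8x vV8y := by decide
  have hadjuv : ∀ j : Fin 8, G8.Adj (vV8u j) (vV8v j) := by decide
  have hwu : ∀ j : Fin 8, w (vV8u j) = b := by
    intro j
    rcases hall (vV8u j) with h | h
    · exact absurd h.symm (hadj (hadjxu j))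
    · exact h
  have hwy : w vV8y = b := by
    rcases hall vV8y with h | h
    · exact absurd h.symm (hadj hadjxy)
    · exact h
  have hwv : ∀ j : Fin 8, w (vV8v j) = a := by
    intro j
    rcases hall (vV8v j) with h | h
    · exact h
    · exact absurd (h.trans (hwu j).symm).symm (hadj (hadjuv j))
  -- total sum is 630
  have himage : Finset.univ.image m = Finset.Icc 1 35 := by
    apply Finset.eq_of_subset_of_card_le
    · intro n hn
      obtain ⟨i, -, rfl⟩ := Finset.mem_image.mp hn
      exact Finset.mem_Icc.mpr (hrange i)
    · rw [Finset.card_image_of_injective _ hm]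
      decide
  have hsum630 : ∑ i, m i = 630 := by
    have h1 : ∑ n ∈ Finset.univ.image m, n = ∑ i, m i :=
      Finset.sum_image (fun x _ y _ h => hm h)
    rw [himage] at h1
    rw [← h1]
    decide
  -- the 16 pair labels sum to 8a
  set IPQ : Finset (V8 ⊕ EI8) :=
    (Finset.univ.image fun j : Fin 8 => Sum.inl (vV8v j)) ∪
      (Finset.univ.image fun j : Fin 8 => Sum.inr (some (j, true))) with hIPQ
  have hIPQsum : ∑ i ∈ IPQ, m i = 8 * a := by
    rw [hIPQ, Finset.sum_union (by decide),
      Finset.sum_image (by decide), Finset.sum_image (by decide),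
      ← Finset.sum_add_distrib]
    have : ∀ j : Fin 8, m (Sum.inl (vV8v j)) + m (Sum.inr (some (j, true))) = a := by
      intro j
      rw [← hwv j, hw, weight_v]
      rfl
    rw [Finset.sum_congr rfl fun j _ => this j]
    simp [Finset.sum_const, Finset.card_univ, mul_comm]
  have hKsum : ∑ i ∈ Finset.univ \ IPQ, m i + 8 * a = 630 := by
    rw [← hIPQsum, Finset.sum_sdiff (Finset.subset_univ _)]
    exact hsum630
  -- the 10 labels at the center sum to a
  set IT : Finset (V8 ⊕ EI8) :=
    insert (Sum.inl vV8x) (insert (Sum.inr (none : EI8))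
      (Finset.univ.image fun j : Fin 8 => Sum.inr (some (j, false)))) with hIT
  have hITsum : ∑ i ∈ IT, m i = a := by
    rw [hIT, Finset.sum_insert (by decide), Finset.sum_insert (by decide),
      Finset.sum_image (by decide)]
    rw [ha, hw, weight_x]
    rfl
  -- image finsets
  set K : Finset ℕ := (Finset.univ \ IPQ).image m with hKdef
  set Tn : Finset ℕ := IT.image m with hTdef
  have hKcard : K.card = 19 := by
    rw [hKdef, Finset.card_image_of_injective _ hm]; decide
  have hTcard : Tn.card = 10 := by
    rw [hTdef, Finset.card_image_of_injective _ hm]; decide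
  have hKs : ∑ x ∈ K, x = ∑ i ∈ Finset.univ \ IPQ, m i := by
    rw [hKdef]; exact Finset.sum_image (fun x _ y _ h => hm h)
  have hTs : ∑ x ∈ Tn, x = a := by
    rw [hTdef, Finset.sum_image (fun x _ y _ h => hm h)]; exact hITsum
  have hK1 : ∀ x ∈ K, 1 ≤ x := by
    intro x hx; obtain ⟨i, -, rfl⟩ := Finset.mem_image.mp hx; exact (hrange i).1
  have hT1 : ∀ x ∈ Tn, 1 ≤ x := by
    intro x hx; obtain ⟨i, -, rfl⟩ := Finset.mem_image.mp hx; exact (hrange i).1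
  -- a = 55
  have hlbK := two_mul_sum_lb 19 K hKcard hK1
  have hlbT := two_mul_sum_lb 10 Tn hTcard hT1
  rw [hKs] at hlbK
  rw [hTs] at hlbT
  have ha55 : a = 55 := by omega
  have hK190 : ∑ x ∈ K, x = 190 := by rw [hKs]; omega
  have hT55 : ∑ x ∈ Tn, x = 55 := by rw [hTs, ha55]
  -- all elements of Tn are at most 10, all elements of K at most 19
  have hTle : ∀ t ∈ Tn, t ≤ 10 := by
    intro t ht
    by_contra hgt
    have hsplit : t + ∑ x ∈ Tn.erase t, x = ∑ x ∈ Tn, x :=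
      Finset.add_sum_erase Tn (fun x => x) ht
    have hlb := two_mul_sum_lb 9 (Tn.erase t)
      (by simp [Finset.card_erase_of_mem ht, hTcard])
      (fun x hx => hT1 x (Finset.mem_of_mem_erase hx))
    omega
  have hKle : ∀ t ∈ K, t ≤ 19 := by
    intro t ht
    by_contra hgt
    have hsplit : t + ∑ x ∈ K.erase t, x = ∑ x ∈ K, x :=
      Finset.add_sum_erase K (fun x => x) ht
    have hlb := two_mul_sum_lb 18 (K.erase t)
      (by simp [Finset.card_erase_of_mem ht, hKcard])
      (fun x hx => hK1 x (Finset.mem_of_mem_erase hx))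
    omega
  have hTeq : Tn = Finset.Icc 1 10 := by
    apply Finset.eq_of_subset_of_card_le
    · intro t ht; exact Finset.mem_Icc.mpr ⟨hT1 t ht, hTle t ht⟩
    · rw [hTcard]; decide
  have hKeq : K = Finset.Icc 1 19 := by
    apply Finset.eq_of_subset_of_card_le
    · intro t ht; exact Finset.mem_Icc.mpr ⟨hK1 t ht, hKle t ht⟩
    · rw [hKcard]; decide
  -- extract the final numeric bounds
  have hE0 : m (Sum.inr (none : EI8)) ≤ 10 := by
    have : m (Sum.inr (none : EI8)) ∈ Tn :=
      Finset.mem_image_of_mem m (by rw [hIT]; decide)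
    rw [hTeq] at this
    exact (Finset.mem_Icc.mp this).2
  have hY : m (Sum.inl vV8y) ≤ 19 := by
    have : m (Sum.inl vV8y) ∈ K :=
      Finset.mem_image_of_mem m (by decide)
    rw [hKeq] at this
    exact (Finset.mem_Icc.mp this).2
  have hS0 : 11 ≤ m (Sum.inl (vV8u 0)) := by
    have hnot : m (Sum.inl (vV8u 0)) ∉ Tn := by
      intro hmem
      obtain ⟨i, hi, hmi⟩ := Finset.mem_image.mp hmem
      have : i = Sum.inl (vV8u 0) := hm hmi
      rw [this, hIT] at hi
      exact absurd hi (by decide)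
    rw [hTeq] at hnot
    have h1 := (hrange (Sum.inl (vV8u 0))).1
    simp only [Finset.mem_Icc, not_and, not_le] at hnot
    omega
  have hQ0 : 20 ≤ m (Sum.inr (some ((0 : Fin 8), true))) := by
    have hnot : m (Sum.inr (some ((0 : Fin 8), true))) ∉ K := by
      intro hmem
      obtain ⟨i, hi, hmi⟩ := Finset.mem_image.mp hmem
      have : i = Sum.inr (some ((0 : Fin 8), true)) := hm hmi
      rw [this, hIPQ] at hi
      exact absurd hi (by decide)
    rw [hKeq] at hnot
    have h1 := (hrange (Sum.inr (some ((0 : Fin 8), true)))).1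
    simp only [Finset.mem_Icc, not_and, not_le] at hnot
    omega
  have hR0 : 1 ≤ m (Sum.inr (some ((0 : Fin 8), false))) :=
    (hrange (Sum.inr (some ((0 : Fin 8), false)))).1
  -- the two expressions for b clash
  have hb1 : b = m (Sum.inl vV8y) + m (Sum.inr (none : EI8)) := by
    rw [← hwy, hw, weight_y]; rfl
  have hb2 : b = m (Sum.inl (vV8u 0)) +
      (m (Sum.inr (some ((0 : Fin 8), false))) + m (Sum.inr (some ((0 : Fin 8), true)))) := by
    rw [← hwu 0, hw, weight_u]; rfl
  omega

/- ### an explicit local antimagic total labeling with three weights -/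

def rL8 : Fin 8 → ℕ := ![23, 22, 24, 20, 19, 21, 26, 25]
def sL8 : Fin 8 → ℕ := ![10, 12, 11, 16, 18, 17, 13, 15]

def fv08 : V8 → ℕ
  | none => 14
  | some (Sum.inl _) => 27
  | some (Sum.inr (j, false)) => sL8 j
  | some (Sum.inr (j, true)) => (j : ℕ) + 1

def fe28 : V8 → V8 → ℕ
  | none, some (Sum.inl _) => 9
  | some (Sum.inl _), none => 9
  | none, some (Sum.inr (j, false)) => rL8 j
  | some (Sum.inr (j, false)), none => rL8 j
  | some (Sum.inr (j, false)), some (Sum.inr (j', true)) => if j = j' then 35 - (j : ℕ) else 0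
  | some (Sum.inr (j, true)), some (Sum.inr (j', false)) => if j = j' then 35 - (j' : ℕ) else 0
  | _, _ => 0

def fe08 : Sym2 V8 → ℕ := Sym2.lift ⟨fe28, by decide⟩

lemma exists_three : ∃ fv fe, IsLocalAntimagicTotal (spider12 1 8) fv fe ∧
    (Finset.univ.image (latWeight (spider12 1 8) fv fe)).card = 3 := by
  refine ⟨fv08, fe08, ⟨?_, by decide⟩, by decide⟩
  unfold IsTotalLabeling
  rw [card35]
  have hmr : ∀ i : V8 ⊕ EI8, 1 ≤ Sum.elim fv08 (fun o => fe08 (eE8 o)) i ∧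
      Sum.elim fv08 (fun o => fe08 (eE8 o)) i ≤ 35 := by decide
  have hminj : Function.Injective (Sum.elim fv08 (fun o => fe08 (eE8 o))) := by decide
  have hmsurj : ∀ n ∈ Finset.Icc 1 35, ∃ i : V8 ⊕ EI8,
      Sum.elim fv08 (fun o => fe08 (eE8 o)) i = n := by decide
  refine ⟨fun d _ => ?_, fun d _ d' _ h => ?_, fun n hn => ?_⟩
  · obtain ⟨i, rfl⟩ := ι8_surj d
    rw [g_ι8]
    exact Set.mem_Icc.mpr (hmr i)
  · obtain ⟨i, rfl⟩ := ι8_surj d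
    obtain ⟨i', rfl⟩ := ι8_surj d'
    rw [g_ι8, g_ι8] at h
    exact congrArg ι8 (hminj h)
  · obtain ⟨i, hi⟩ := hmsurj n (Finset.mem_Icc.mpr (Set.mem_Icc.mp hn))
    exact ⟨ι8 i, Set.mem_univ _, by rw [g_ι8]; exact hi⟩

/-- The spider `Sp(1^[1], 2^[8])` admits no local antimagic total labeling with exactly
`2` distinct vertex weights; hence its local antimagic total chromatic number is `3`. -/
theorem chiLat_spider12_one_eight :
    (∀ fv fe, IsLocalAntimagicTotal (spider12 1 8) fv fe →
      (Finset.univ.image (latWeight (spider12 1 8) fv fe)).card ≠ 2) ∧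
    chiLat (spider12 1 8) = 3 := by
  refine ⟨no_two_weights, ?_⟩
  have hne0 : ∀ fv fe, IsLocalAntimagicTotal (spider12 1 8) fv fe →
      (Finset.univ.image (latWeight (spider12 1 8) fv fe)).card ≠ 0 := by
    intro fv fe _ h0
    have : latWeight (spider12 1 8) fv fe vV8x ∈
        Finset.univ.image (latWeight (spider12 1 8) fv fe) :=
      Finset.mem_image_of_mem _ (Finset.mem_univ _)
    rw [Finset.card_eq_zero.mp h0] at this
    exact absurd this (Finset.notMem_empty _)
  have hne1 : ∀ fv fe, IsLocalAntimagicTotal (spider12 1 8) fv fe →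
      (Finset.univ.image (latWeight (spider12 1 8) fv fe)).card ≠ 1 := by
    intro fv fe hlat h1
    obtain ⟨w0, hw0⟩ := Finset.card_eq_one.mp h1
    have hx : latWeight (spider12 1 8) fv fe vV8x = w0 := by
      have : latWeight (spider12 1 8) fv fe vV8x ∈
          Finset.univ.image (latWeight (spider12 1 8) fv fe) :=
        Finset.mem_image_of_mem _ (Finset.mem_univ _)
      rw [hw0] at this; simpa using this
    have hy : latWeight (spider12 1 8) fv fe vV8y = w0 := by
      have : latWeight (spider12 1 8) fv fe vV8y ∈
          Finset.univ.image (latWeight (spider12 1 8) fv fe) :=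
        Finset.mem_image_of_mem _ (Finset.mem_univ _)
      rw [hw0] at this; simpa using this
    exact hlat.2 (show G8.Adj vV8x vV8y by decide) (hx.trans hy.symm)
  have h3 : 3 ∈ {c | ∃ fv fe, IsLocalAntimagicTotal (spider12 1 8) fv fe ∧
      (Finset.univ.image (latWeight (spider12 1 8) fv fe)).card = c} := exists_three
  have hle : chiLat (spider12 1 8) ≤ 3 := Nat.sInf_le h3
  have hmem := Nat.sInf_mem (⟨3, h3⟩ : Set.Nonempty _)
  obtain ⟨fv, fe, hlat, hc⟩ := hmem
  have h0 := hne0 fv fe hlat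
  have h1 := hne1 fv fe hlat
  have h2 := no_two_weights fv fe hlat
  rw [hc] at h0 h1 h2
  unfold chiLat at hle ⊢
  omega
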